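/- For the active-PI PLL system with sinusoidal PD characteristic and ω = 0, every point in the sublevel set {V < 1} of the Lyapunov function V(x, θ) = (Kτ₁/2)x² + (1 − cos θ)/2 with θ ∈ (−π, π) gives rise to a solution along which V remains less than 1 for all t ≥ 0, hence θ(t) stays in (−π, π) modulo the constraint cos θ(t) > 1 − 2V(x(0), θ(0)); in particular |θ(t)| never reaches π, so no cycle slipping occurs. -/

import Mathlib

/-- For the active-PI PLL with sinusoidal PD and `ω = 0`, any
solution starting in the sublevel set `{V < 1}` with `θ(0) ∈ (−π, π)`, where
`V(x,θ) = (Kτ₁/2)x² + (1 − cos θ)/2`, satisfies `V < 1` for all `t ≥ 0`,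
`|θ(t)| < π` for all `t ≥ 0`, and no cycle slipping occurs. -/
theorem activePI_no_cycle_slipping
    (K τ₁ τ₂ : ℝ) (hK : 0 < K) (hτ₁ : 0 < τ₁) (hτ₂ : 0 < τ₂)
    (x θ : ℝ → ℝ)
    (hx : ∀ t, 0 ≤ t → HasDerivAt x (Real.sin (θ t) / (2 * τ₁)) t)
    (hθ : ∀ t, 0 ≤ t → HasDerivAt θ
      (-(K * (x t + τ₂ / (2 * τ₁) * Real.sin (θ t)))) t)
    (hcont : Continuous θ)
    (hθ0 : θ 0 ∈ Set.Ioo (-Real.pi) Real.pi)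
    (hV0 : K * τ₁ / 2 * (x 0) ^ 2 + (1 - Real.cos (θ 0)) / 2 < 1) :
    (∀ t, 0 ≤ t →
      K * τ₁ / 2 * (x t) ^ 2 + (1 - Real.cos (θ t)) / 2 < 1) ∧
    (∀ t, 0 ≤ t → |θ t| < Real.pi) ∧
    ¬ (∃ t > (0:ℝ), 2 * Real.pi ≤ |θ t - θ 0|) := by
  set V : ℝ → ℝ := fun t => K * τ₁ / 2 * (x t) ^ 2 + (1 - Real.cos (θ t)) / 2 with hVdef
  have hVder : ∀ t, 0 ≤ t →
      HasDerivAt V (-(K * τ₂ / (4 * τ₁)) * Real.sin (θ t) ^ 2) t := by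
    intro t ht
    have h1 : HasDerivAt (fun s => K * τ₁ / 2 * (x s) ^ 2)
        (K * τ₁ / 2 * (2 * x t ^ 1 * (Real.sin (θ t) / (2 * τ₁)))) t :=
      ((hx t ht).pow 2).const_mul _
    have h2 : HasDerivAt (fun s => Real.cos (θ s))
        (-Real.sin (θ t) * -(K * (x t + τ₂ / (2 * τ₁) * Real.sin (θ t)))) t :=
      (Real.hasDerivAt_cos (θ t)).comp t (hθ t ht)
    have h3 := ((h2.const_sub 1).div_const 2)
    have := h1.add h3
    convert this using 1
    · rfl
    · rfl
    · rfl
    field_simp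
    ring
  have hanti : AntitoneOn V (Set.Ici (0:ℝ)) := by
    apply antitoneOn_of_deriv_nonpos (convex_Ici 0)
    · intro t ht
      exact (hVder t ht).continuousAt.continuousWithinAt
    · intro t ht
      rw [interior_Ici] at ht
      exact (hVder t (le_of_lt ht)).differentiableAt.differentiableWithinAt
    · intro t ht
      rw [interior_Ici] at ht
      rw [(hVder t (le_of_lt ht)).deriv]
      have : 0 ≤ K * τ₂ / (4 * τ₁) := by positivity
      nlinarith [sq_nonneg (Real.sin (θ t))]
  have hVlt : ∀ t, 0 ≤ t → V t < 1 := by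
    intro t ht
    have := hanti (Set.self_mem_Ici) ht ht
    exact lt_of_le_of_lt this hV0
  have hcos : ∀ t, 0 ≤ t → -1 < Real.cos (θ t) := by
    intro t ht
    have h := hVlt t ht
    simp only [hVdef] at h
    nlinarith [sq_nonneg (x t), mul_pos hK hτ₁]
  have habs : ∀ t, 0 ≤ t → |θ t| < Real.pi := by
    intro t ht
    by_contra h
    push_neg at h
    rcases le_abs.mp h with hge | hge
    · -- θ t ≥ π
      have hmem : Real.pi ∈ Set.Icc (θ 0) (θ t) := ⟨le_of_lt hθ0.2, hge⟩
      obtain ⟨s, hs, hsval⟩ := intermediate_value_Icc ht (hcont.continuousOn) hmem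
      have := hcos s hs.1
      rw [hsval, Real.cos_pi] at this
      exact lt_irrefl _ this
    · -- −θ t ≥ π, i.e. θ t ≤ −π
      have hle : θ t ≤ -Real.pi := by linarith
      have hmem : -Real.pi ∈ Set.Icc (θ t) (θ 0) := ⟨hle, le_of_lt hθ0.1⟩
      obtain ⟨s, hs, hsval⟩ := intermediate_value_Icc' ht (hcont.continuousOn) hmem
      have := hcos s hs.1
      rw [hsval, Real.cos_neg, Real.cos_pi] at this
      exact lt_irrefl _ this
  refine ⟨hVlt, habs, ?_⟩
  rintro ⟨t, ht, hslip⟩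
  have h1 := habs t (le_of_lt ht)
  have h2 := habs 0 le_rfl
  have := abs_sub (θ t) (θ 0)
  have htri : |θ t - θ 0| ≤ |θ t| + |θ 0| := abs_sub (θ t) (θ 0)
  linarith
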